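/- arXiv:1803.09619 — 4 statements merged into one kernel-verified Lean document; each statement's English description precedes it below -/
import Mathlib

section
/- Let T be a set of first-order L-sentences and let Int^T(X) be the set of interpretations of L on X that satisfy every sentence of T. Then Int^T(X) is isomorphism-invariant, and every maximal element and every minimal element of (Int^T(X), ⊆) is a reversible interpretation. -/
open FirstOrder

/-- An interpretation of the relational language `L` on the set `X`: an assignment of an
`n`-ary relation on `X` to each `n`-ary relation symbol of `L`. -/
def Interp (L : FirstOrder.Language) (X : Type*) : Type _ :=
  ∀ n : ℕ, L.Relations n → Set (Fin n → X)

namespace Interp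

variable {L : FirstOrder.Language} {X : Type*}

/-- The `L`-structure with universe `X` determined by an interpretation. -/
def str [L.IsRelational] (ρ : Interp L X) : L.Structure X where
  funMap := fun {_} f _ => isEmptyElim f
  RelMap := fun {n} r x => x ∈ ρ n r

/-- `ρ` satisfies the `L`-sentence `φ` (as a structure with universe `X`). -/
def Models [L.IsRelational] (ρ : Interp L X) (φ : L.Sentence) : Prop :=
  @FirstOrder.Language.Sentence.Realize L X ρ.str φ

/-- `ρ ⊆ σ`: every relation of `ρ` is contained in the corresponding relation of `σ`. -/
def le (ρ σ : Interp L X) : Prop := ∀ n (r : L.Relations n), ρ n r ⊆ σ n r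

/-- The image `g[ρ]` of an interpretation under a bijection `g` of `X`:
`r(x)` holds in `g[ρ]` iff `r(g⁻¹ ∘ x)` holds in `ρ`. -/
def img (g : X ≃ X) (ρ : Interp L X) : Interp L X :=
  fun n r => {x | (fun k => g.symm (x k)) ∈ ρ n r}

/-- A set of interpretations is isomorphism-invariant iff it is closed under
images by bijections of `X`. -/
def IsoInvariant (C : Set (Interp L X)) : Prop :=
  ∀ ρ ∈ C, ∀ g : X ≃ X, img g ρ ∈ C

/-- An interpretation is reversible iff every bijective homomorphism from it to itself
is an automorphism. -/
def Reversible (ρ : Interp L X) : Prop :=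
  ∀ f : X ≃ X,
    (∀ n (r : L.Relations n), ∀ x ∈ ρ n r, (fun k => f (x k)) ∈ ρ n r) →
    ∀ n (r : L.Relations n), ∀ x : Fin n → X, x ∈ ρ n r ↔ (fun k => f (x k)) ∈ ρ n r

/-- `τ` is a maximal element of `C` with respect to `⊆`. -/
def MaxIn (C : Set (Interp L X)) (τ : Interp L X) : Prop :=
  τ ∈ C ∧ ¬∃ σ ∈ C, le τ σ ∧ τ ≠ σ

/-- `τ` is a minimal element of `C` with respect to `⊆`. -/
def MinIn (C : Set (Interp L X)) (τ : Interp L X) : Prop :=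
  τ ∈ C ∧ ¬∃ σ ∈ C, le σ τ ∧ σ ≠ τ

end Interp

/-- The set `Int^T(X)` of all interpretations of `L` on `X` satisfying every sentence of `T`. -/
def IntT (L : FirstOrder.Language) [L.IsRelational] (X : Type*) (T : L.Theory) :
    Set (Interp L X) :=
  {ρ | ∀ φ ∈ T, ρ.Models φ}


section aux
variable {L : FirstOrder.Language} [L.IsRelational] {X : Type*}

lemma models_img_iff (ρ : Interp L X) (g : X ≃ X) (φ : L.Sentence) :
    (Interp.img g ρ).Models φ ↔ ρ.Models φ := by
  letI M := ρ.str
  letI N := (Interp.img g ρ).str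
  have hrel : ∀ {n : ℕ} (r : L.Relations n) (x : Fin n → X),
      @Language.Structure.RelMap L X N n r (⇑g ∘ x) ↔
        @Language.Structure.RelMap L X M n r x := by
    intro n r x
    show (fun k => g.symm (g (x k))) ∈ ρ n r ↔ x ∈ ρ n r
    simp
  have e : @Language.Equiv L X X M N :=
    @Language.Equiv.mk L X X M N g (fun {n} f _ => isEmptyElim f) hrel
  exact (@Language.StrongHomClass.realize_sentence L X X M N
    (@Language.Equiv L X X M N) _ _ e φ).symm

end aux

/-- For any set `T` of first-order `L`-sentences, the set `Int^T(X)` is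
isomorphism-invariant, and all of its maximal and minimal elements (w.r.t. `⊆`)
are reversible interpretations. -/
theorem stmt_3 (L : FirstOrder.Language) [L.IsRelational] (X : Type*) [Nonempty X]
    (T : L.Theory) :
    Interp.IsoInvariant (IntT L X T) ∧
    (∀ τ : Interp L X, Interp.MaxIn (IntT L X T) τ → Interp.Reversible τ) ∧
    (∀ τ : Interp L X, Interp.MinIn (IntT L X T) τ → Interp.Reversible τ) := by
  have inv : Interp.IsoInvariant (IntT L X T) := by
    intro ρ hρ g φ hφ
    exact (models_img_iff ρ g φ).2 (hρ φ hφ)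
  refine ⟨inv, ?_, ?_⟩
  · rintro τ ⟨hτ, hmax⟩ f hf n r x
    have hle : Interp.le τ (Interp.img f.symm τ) := by
      intro n r x hx
      show (fun k => f.symm.symm (x k)) ∈ τ n r
      simpa using hf n r x hx
    have himg : Interp.img f.symm τ ∈ IntT L X T := inv τ hτ f.symm
    have heq : τ = Interp.img f.symm τ := by
      by_contra hne
      exact hmax ⟨Interp.img f.symm τ, himg, hle, hne⟩
    constructor
    · exact hf n r x
    · intro hx
      rw [heq]
      show (fun k => f.symm.symm (x k)) ∈ τ n r
      simpa using hx
  · rintro τ ⟨hτ, hmin⟩ f hf n r x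
    have hle : Interp.le (Interp.img f τ) τ := by
      intro n r x hx
      have h2 := hf n r _ hx
      simpa using h2
    have himg : Interp.img f τ ∈ IntT L X T := inv τ hτ f
    have heq : Interp.img f τ = τ := by
      by_contra hne
      exact hmin ⟨Interp.img f τ, himg, hle, hne⟩
    constructor
    · exact hf n r x
    · intro hx
      rw [← heq] at hx
      have h3 : (fun k => f.symm ((fun j => f (x j)) k)) ∈ τ n r := hx
      simpa using h3
end

section
/- Let φ be a universal first-order L-sentence and let Λ be a nonempty set of interpretations of L on X that is a chain with respect to ⊆ and such that every member of Λ satisfies φ. Then the union interpretation ∪Λ (in which a relation symbol r holds of a tuple x iff r(x) holds in some member of Λ) also satisfies φ. Dually, the intersection interpretation ∩Λ (in which r(x) holds iff r(x) holds in every member of Λ) also satisfies φ. -/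
open FirstOrder

/-- A first-order sentence is universal iff it is of the form `∀ v₁ … ∀ v_k, ψ`
with `ψ` quantifier-free. -/
def IsUniversalSentence {L : FirstOrder.Language} (φ : L.Sentence) : Prop :=
  ∃ (k : ℕ) (ψ : L.BoundedFormula Empty k), ψ.IsQF ∧ φ = ψ.alls

section Aux

variable {L : FirstOrder.Language} {X : Type*} [L.IsRelational]

lemma term_realize_irrel (ρ σ : Interp L X) {α : Type*} (t : L.Term α) (v : α → X) :
    @Language.Term.realize L X ρ.str α v t = @Language.Term.realize L X σ.str α v t := by
  induction t with
  | var => rfl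
  | func f ts ih => exact isEmptyElim f

lemma key_lemma (Λ : Set (Interp L X)) (U : Interp L X)
    (D : Interp L X → Interp L X → Prop) (hne : Λ.Nonempty)
    (htrans : ∀ a b c, D a b → D b c → D a c)
    (hdir : ∀ ρ₁ ∈ Λ, ∀ ρ₂ ∈ Λ, ∃ ρ ∈ Λ, D ρ₁ ρ ∧ D ρ₂ ρ)
    (hatom : ∀ n (r : L.Relations n) (x : Fin n → X),
      ∃ ρ ∈ Λ, ∀ σ ∈ Λ, D ρ σ → (x ∈ σ n r ↔ x ∈ U n r))
    {k : ℕ} (ψ : L.BoundedFormula Empty k) (hqf : ψ.IsQF)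
    (v : Empty → X) (xs : Fin k → X) :
    ∃ ρ ∈ Λ, ∀ σ ∈ Λ, D ρ σ →
      (@Language.BoundedFormula.Realize L X σ.str Empty k ψ v xs ↔
        @Language.BoundedFormula.Realize L X U.str Empty k ψ v xs) := by
  induction hqf with
  | falsum =>
    obtain ⟨ρ, hρ⟩ := hne
    exact ⟨ρ, hρ, fun σ hσ _ => Iff.rfl⟩
  | of_isAtomic h =>
    cases h with
    | equal t₁ t₂ =>
      obtain ⟨ρ, hρ⟩ := hne
      refine ⟨ρ, hρ, fun σ hσ _ => ?_⟩
      simp only [Language.BoundedFormula.realize_bdEqual]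
      rw [term_realize_irrel σ U, term_realize_irrel σ U]
    | rel R ts =>
      obtain ⟨ρ, hρ, hρ'⟩ := hatom _ R
        (fun i => @Language.Term.realize L X U.str _ (Sum.elim v xs) (ts i))
      refine ⟨ρ, hρ, fun σ hσ hD => ?_⟩
      simp only [Language.BoundedFormula.realize_rel]
      have hterm : ∀ i, @Language.Term.realize L X σ.str _ (Sum.elim v xs) (ts i) =
          @Language.Term.realize L X U.str _ (Sum.elim v xs) (ts i) :=
        fun i => term_realize_irrel σ U _ _
      simp only [hterm]
      exact hρ' σ hσ hD
  | imp _ _ ih₁ ih₂ =>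
    obtain ⟨ρ₁, hρ₁, h₁⟩ := ih₁
    obtain ⟨ρ₂, hρ₂, h₂⟩ := ih₂
    obtain ⟨ρ, hρ, hD₁, hD₂⟩ := hdir ρ₁ hρ₁ ρ₂ hρ₂
    refine ⟨ρ, hρ, fun σ hσ hD => ?_⟩
    simp only [Language.BoundedFormula.realize_imp]
    rw [h₁ σ hσ (htrans _ _ _ hD₁ hD), h₂ σ hσ (htrans _ _ _ hD₂ hD)]

lemma interpLeTrans : ∀ a b c : Interp L X, Interp.le a b → Interp.le b c → Interp.le a c :=
  fun _ _ _ h₁ h₂ n r => (h₁ n r).trans (h₂ n r)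

lemma interpLeRefl (a : Interp L X) : Interp.le a a := fun _ _ => Set.Subset.refl _

lemma models_alls (ρ : Interp L X) {k : ℕ} (ψ : L.BoundedFormula Empty k) :
    ρ.Models ψ.alls ↔
      ∀ xs : Fin k → X, @Language.BoundedFormula.Realize L X ρ.str Empty k ψ default xs := by
  letI := ρ.str
  exact Language.BoundedFormula.realize_alls

end Aux

/-- A universal first-order sentence satisfied by every member of a nonempty `⊆`-chain of
interpretations of `L` on `X` is also satisfied by the union interpretation and by the
intersection interpretation of the chain. -/
theorem stmt_4 (L : FirstOrder.Language) [L.IsRelational] (X : Type*) [Nonempty X]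
    (φ : L.Sentence) (hφ : IsUniversalSentence φ)
    (Λ : Set (Interp L X)) (hne : Λ.Nonempty)
    (hchain : ∀ ρ ∈ Λ, ∀ σ ∈ Λ, Interp.le ρ σ ∨ Interp.le σ ρ)
    (hsat : ∀ ρ ∈ Λ, ρ.Models φ) :
    Interp.Models (fun n r => {x | ∃ ρ ∈ Λ, x ∈ ρ n r} : Interp L X) φ ∧
    Interp.Models (fun n r => {x | ∀ ρ ∈ Λ, x ∈ ρ n r} : Interp L X) φ := by
  obtain ⟨k, ψ, hqf, rfl⟩ := hφ
  constructor
  · set U : Interp L X := fun n r => {x | ∃ ρ ∈ Λ, x ∈ ρ n r} with hU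
    rw [models_alls]
    intro xs
    have hatom : ∀ n (r : L.Relations n) (x : Fin n → X),
        ∃ ρ ∈ Λ, ∀ σ ∈ Λ, Interp.le ρ σ → (x ∈ σ n r ↔ x ∈ U n r) := by
      intro n r x
      by_cases hx : x ∈ U n r
      · obtain ⟨ρ, hρ, hxρ⟩ := hx
        exact ⟨ρ, hρ, fun σ hσ hle => iff_of_true (hle n r hxρ) ⟨ρ, hρ, hxρ⟩⟩
      · obtain ⟨ρ, hρ⟩ := hne
        exact ⟨ρ, hρ, fun σ hσ _ => iff_of_false (fun h => hx ⟨σ, hσ, h⟩) hx⟩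
    have hdir : ∀ ρ₁ ∈ Λ, ∀ ρ₂ ∈ Λ, ∃ ρ ∈ Λ, Interp.le ρ₁ ρ ∧ Interp.le ρ₂ ρ := by
      intro ρ₁ h₁ ρ₂ h₂
      rcases hchain ρ₁ h₁ ρ₂ h₂ with h | h
      · exact ⟨ρ₂, h₂, h, interpLeRefl _⟩
      · exact ⟨ρ₁, h₁, interpLeRefl _, h⟩
    obtain ⟨ρ, hρ, hρ'⟩ := key_lemma Λ U Interp.le hne interpLeTrans hdir hatom ψ hqf
      default xs
    rw [← hρ' ρ hρ (interpLeRefl ρ)]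
    exact (models_alls ρ ψ).mp (hsat ρ hρ) xs
  · set U : Interp L X := fun n r => {x | ∀ ρ ∈ Λ, x ∈ ρ n r} with hU
    rw [models_alls]
    intro xs
    set D : Interp L X → Interp L X → Prop := fun ρ σ => Interp.le σ ρ with hD
    have hatom : ∀ n (r : L.Relations n) (x : Fin n → X),
        ∃ ρ ∈ Λ, ∀ σ ∈ Λ, D ρ σ → (x ∈ σ n r ↔ x ∈ U n r) := by
      intro n r x
      by_cases hx : x ∈ U n r
      · obtain ⟨ρ, hρ⟩ := hne
        exact ⟨ρ, hρ, fun σ hσ _ => iff_of_true (hx σ hσ) hx⟩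
      · have hx' : ∃ ρ ∈ Λ, x ∉ ρ n r := by
          by_contra h
          push_neg at h
          exact hx fun ρ hρ => h ρ hρ
        obtain ⟨ρ, hρ, hxρ⟩ := hx'
        refine ⟨ρ, hρ, fun σ hσ hle => iff_of_false (fun h => hxρ (hle n r h))
          (fun h => hxρ (h ρ hρ))⟩
    have hdir : ∀ ρ₁ ∈ Λ, ∀ ρ₂ ∈ Λ, ∃ ρ ∈ Λ, D ρ₁ ρ ∧ D ρ₂ ρ := by
      intro ρ₁ h₁ ρ₂ h₂
      rcases hchain ρ₁ h₁ ρ₂ h₂ with h | h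
      · exact ⟨ρ₁, h₁, interpLeRefl _, h⟩
      · exact ⟨ρ₂, h₂, h, interpLeRefl _⟩
    have htrans : ∀ a b c : Interp L X, D a b → D b c → D a c :=
      fun a b c h₁ h₂ => interpLeTrans _ _ _ h₂ h₁
    obtain ⟨ρ, hρ, hρ'⟩ := key_lemma Λ U D hne htrans hdir hatom ψ hqf
      default xs
    rw [← hρ' ρ hρ (interpLeRefl ρ)]
    exact (models_alls ρ ψ).mp (hsat ρ hρ) xs
end

section
/- Let T be a set of universal first-order L-sentences and suppose that the set Int^T(X) of interpretations of L on X satisfying every sentence of T is nonempty. Then for every M ∈ Int^T(X) there exists a maximal element N of (Int^T(X), ⊆) with M ⊆ N, and every such maximal element N is a reversible interpretation. -/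
open FirstOrder

section Aux

variable {L : FirstOrder.Language} {X : Type*}

namespace Interp

lemma le_refl' (ρ : Interp L X) : le ρ ρ := fun _ _ => Set.Subset.rfl

lemma le_trans' {ρ σ τ : Interp L X} (h1 : le ρ σ) (h2 : le σ τ) : le ρ τ :=
  fun n r => (h1 n r).trans (h2 n r)

lemma le_antisymm' {ρ σ : Interp L X} (h1 : le ρ σ) (h2 : le σ ρ) : ρ = σ :=
  funext fun n => funext fun r => Set.Subset.antisymm (h1 n r) (h2 n r)

variable [L.IsRelational]

lemma term_realize_eq (S1 S2 : L.Structure X) {α} (v : α → X) (t : L.Term α) :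
    @FirstOrder.Language.Term.realize L X S1 α v t
      = @FirstOrder.Language.Term.realize L X S2 α v t := by
  cases t with
  | var => rfl
  | func f _ => exact isEmptyElim f

/-- Key lemma: for a quantifier-free formula and a chain with union `U`, the realization
in `U` agrees with the realization in all sufficiently big members of the chain. -/
lemma qf_chain_key {C : Set (Interp L X)} (hC : IsChain le C) (hCne : C.Nonempty)
    {U : Interp L X} (hU : ∀ n r, U n r = ⋃ σ ∈ C, σ n r)
    {k : ℕ} {ψ : L.BoundedFormula Empty k} (h : ψ.IsQF)
    (v : Empty → X) (xs : Fin k → X) :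
    ∃ σ ∈ C, ∀ τ, le σ τ → le τ U →
      (@FirstOrder.Language.BoundedFormula.Realize L X τ.str Empty k ψ v xs ↔
       @FirstOrder.Language.BoundedFormula.Realize L X U.str Empty k ψ v xs) := by
  induction h with
  | falsum =>
    obtain ⟨σ, hσ⟩ := hCne
    exact ⟨σ, hσ, fun τ _ _ => Iff.rfl⟩
  | of_isAtomic ha =>
    cases ha with
    | equal t₁ t₂ =>
      obtain ⟨σ, hσ⟩ := hCne
      refine ⟨σ, hσ, fun τ _ _ => ?_⟩
      show (@FirstOrder.Language.Term.realize L X τ.str _ _ t₁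
          = @FirstOrder.Language.Term.realize L X τ.str _ _ t₂) ↔
        (@FirstOrder.Language.Term.realize L X U.str _ _ t₁
          = @FirstOrder.Language.Term.realize L X U.str _ _ t₂)
      rw [term_realize_eq τ.str U.str, term_realize_eq τ.str U.str]
    | @rel l R ts =>
      by_cases hx : (fun i => @FirstOrder.Language.Term.realize L X U.str _
          (Sum.elim v xs) (ts i)) ∈ U l R
      · rw [hU] at hx
        simp only [Set.mem_iUnion] at hx
        obtain ⟨σ, hσC, hσx⟩ := hx
        refine ⟨σ, hσC, fun τ hστ hτU => ?_⟩
        have hτx := hστ l R hσx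
        have ht : ∀ i, @FirstOrder.Language.Term.realize L X τ.str _
            (Sum.elim v xs) (ts i) = @FirstOrder.Language.Term.realize L X U.str _
            (Sum.elim v xs) (ts i) := fun i => term_realize_eq _ _ _ _
        show ((fun i => @FirstOrder.Language.Term.realize L X τ.str _ _ (ts i)) ∈ τ l R) ↔
          ((fun i => @FirstOrder.Language.Term.realize L X U.str _ _ (ts i)) ∈ U l R)
        constructor
        · intro _
          rw [hU]
          exact Set.mem_iUnion.2 ⟨σ, Set.mem_iUnion.2 ⟨hσC, hσx⟩⟩
        · intro _
          simpa only [ht] using hτx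
      · obtain ⟨σ, hσ⟩ := hCne
        refine ⟨σ, hσ, fun τ hστ hτU => ?_⟩
        have ht : ∀ i, @FirstOrder.Language.Term.realize L X τ.str _
            (Sum.elim v xs) (ts i) = @FirstOrder.Language.Term.realize L X U.str _
            (Sum.elim v xs) (ts i) := fun i => term_realize_eq _ _ _ _
        show ((fun i => @FirstOrder.Language.Term.realize L X τ.str _ _ (ts i)) ∈ τ l R) ↔
          ((fun i => @FirstOrder.Language.Term.realize L X U.str _ _ (ts i)) ∈ U l R)
        constructor
        · intro hmem
          exact absurd (hτU l R (by simpa only [ht] using hmem)) hx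
        · intro hmem
          exact absurd hmem hx
  | imp h₁ h₂ ih₁ ih₂ =>
    obtain ⟨σ₁, hσ₁, H₁⟩ := ih₁
    obtain ⟨σ₂, hσ₂, H₂⟩ := ih₂
    rcases eq_or_ne σ₁ σ₂ with rfl | hne
    · exact ⟨σ₁, hσ₁, fun τ hστ hτU => imp_congr (H₁ τ hστ hτU) (H₂ τ hστ hτU)⟩
    · rcases hC hσ₁ hσ₂ hne with h | h
      · exact ⟨σ₂, hσ₂, fun τ hστ hτU =>
          imp_congr (H₁ τ (le_trans' h hστ) hτU) (H₂ τ hστ hτU)⟩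
      · exact ⟨σ₁, hσ₁, fun τ hστ hτU =>
          imp_congr (H₁ τ hστ hτU) (H₂ τ (le_trans' h hστ) hτU)⟩

/-- Satisfaction of arbitrary sentences is invariant under images by bijections. -/
lemma models_img (g : X ≃ X) (ρ : Interp L X) (φ : L.Sentence) :
    (img g ρ).Models φ ↔ ρ.Models φ := by
  have e := @FirstOrder.Language.Equiv.mk L X X ρ.str (img g ρ).str g
    (fun {n} f _ => isEmptyElim f)
    (fun {n} r x => by
      show (fun i => g.symm ((g ∘ x) i)) ∈ ρ n r ↔ x ∈ ρ n r
      simp [Function.comp_def])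
  exact (@FirstOrder.Language.StrongHomClass.realize_sentence L X X ρ.str (img g ρ).str
    _ (@FirstOrder.Language.Equiv.instEquivLike L X X ρ.str (img g ρ).str)
    (@FirstOrder.Language.Equiv.instStrongHomClass L X X ρ.str (img g ρ).str) e φ).symm

end Interp

end Aux

/-- If `T` is a set of universal first-order `L`-sentences and `Int^T(X)` is nonempty, then
above every member of `Int^T(X)` there is a maximal element of `(Int^T(X), ⊆)`, and every
maximal element of `Int^T(X)` is a reversible interpretation. -/
theorem stmt_5 (L : FirstOrder.Language) [L.IsRelational] (X : Type*) [Nonempty X]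
    (T : L.Theory) (hT : ∀ φ ∈ T, IsUniversalSentence φ)
    (hne : (IntT L X T).Nonempty) :
    (∀ M ∈ IntT L X T, ∃ N, Interp.MaxIn (IntT L X T) N ∧ Interp.le M N) ∧
    (∀ N, Interp.MaxIn (IntT L X T) N → Interp.Reversible N) := by
  constructor
  · -- existence of maximal elements via Zorn
    intro M hM
    letI : PartialOrder (Interp L X) :=
      { le := Interp.le
        le_refl := Interp.le_refl'
        le_trans := fun _ _ _ => Interp.le_trans'
        le_antisymm := fun _ _ => Interp.le_antisymm' }
    have key : ∀ c ⊆ IntT L X T, IsChain (· ≤ ·) c → ∀ y ∈ c,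
        ∃ ub ∈ IntT L X T, ∀ z ∈ c, z ≤ ub := by
      intro c hcs hc y hy
      set U : Interp L X := fun n r => ⋃ σ ∈ c, σ n r with hUdef
      have hU : ∀ n r, U n r = ⋃ σ ∈ c, σ n r := fun _ _ => rfl
      refine ⟨U, ?_, fun z hz n r => Set.subset_iUnion₂ (s := fun σ _ => σ n r) z hz⟩
      intro φ hφ
      obtain ⟨k, ψ, hqf, rfl⟩ := hT φ hφ
      have hUall : (∀ xs : Fin k → X,
          @FirstOrder.Language.BoundedFormula.Realize L X U.str Empty k ψ default xs) →
          Interp.Models U ψ.alls := by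
        letI := U.str
        exact fun h => FirstOrder.Language.BoundedFormula.realize_alls.mpr h
      refine hUall ?_
      intro xs
      obtain ⟨σ, hσc, H⟩ := Interp.qf_chain_key hc ⟨y, hy⟩ hU hqf default xs
      have hσU : Interp.le σ U := fun n r => Set.subset_iUnion₂ (s := fun σ _ => σ n r) σ hσc
      refine (H σ (Interp.le_refl' σ) hσU).1 ?_
      have hσall : ∀ xs : Fin k → X,
          @FirstOrder.Language.BoundedFormula.Realize L X σ.str Empty k ψ default xs := by
        letI := σ.str
        exact fun xs => FirstOrder.Language.BoundedFormula.realize_alls.mp (hcs hσc ψ.alls hφ) xs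
      exact hσall xs
    obtain ⟨N, hMN, hNmem, hNmax⟩ := zorn_le_nonempty₀ (IntT L X T) key M hM
    refine ⟨N, ⟨hNmem, ?_⟩, hMN⟩
    rintro ⟨σ, hσ, hNσ, hNe⟩
    exact hNe (Interp.le_antisymm' hNσ (hNmax hσ hNσ))
  · -- maximal elements are reversible
    rintro N ⟨hNmem, hNmax⟩ f hf n r x
    have himg : Interp.img f.symm N ∈ IntT L X T := fun φ hφ =>
      (Interp.models_img f.symm N φ).2 (hNmem φ hφ)
    have hle : Interp.le N (Interp.img f.symm N) := by
      intro m s y hy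
      show (fun k => f.symm.symm (y k)) ∈ N m s
      simpa using hf m s y hy
    have heq : N = Interp.img f.symm N := by
      by_contra hne'
      exact hNmax ⟨Interp.img f.symm N, himg, hle, hne'⟩
    constructor
    · intro hx
      exact hf n r x hx
    · intro hx
      have hx' : x ∈ (Interp.img f.symm N) n r := by
        show (fun k => f.symm.symm (x k)) ∈ N n r
        simpa using hx
      rw [heq]
      exact hx'
end

section
/- Let T be a set of universal first-order L-sentences and suppose that the set Int^T(X) of interpretations of L on X satisfying every sentence of T is nonempty. Then for every M ∈ Int^T(X) there exists a minimal element N of (Int^T(X), ⊆) with N ⊆ M, and every such minimal element N is a reversible interpretation. -/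
open FirstOrder

namespace StmtAux

open FirstOrder FirstOrder.Language

variable {L : FirstOrder.Language} {X : Type*}

instance : PartialOrder (Interp L X) :=
  inferInstanceAs (PartialOrder (∀ n : ℕ, L.Relations n → Set (Fin n → X)))

lemma le_iff {ρ σ : Interp L X} : Interp.le ρ σ ↔ ρ ≤ σ := Iff.rfl

variable [L.IsRelational]

lemma term_indep (ρ σ : Interp L X) {γ : Type*} (t : L.Term γ) (w : γ → X) :
    @Term.realize L X ρ.str γ w t = @Term.realize L X σ.str γ w t := by
  cases t with
  | var a => rfl
  | func f ts => exact isEmptyElim f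

lemma term_img (g : X ≃ X) (ρ σ : Interp L X) {γ : Type*} (t : L.Term γ) (w : γ → X) :
    @Term.realize L X ρ.str γ (fun a => g.symm (w a)) t =
      g.symm (@Term.realize L X σ.str γ w t) := by
  cases t with
  | var a => rfl
  | func f ts => exact isEmptyElim f

/-- The intersection of a family of interpretations. -/
def inter (c : Set (Interp L X)) : Interp L X := fun n r => ⋂ σ ∈ c, σ n r

lemma inter_le {c : Set (Interp L X)} {σ : Interp L X} (hσ : σ ∈ c) : inter c ≤ σ :=
  fun n r => Set.biInter_subset_of_mem hσ

lemma qf_stable {c : Set (Interp L X)} (hc : IsChain (· ≤ ·) c) (hcne : c.Nonempty)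
    {k : ℕ} {ψ : L.BoundedFormula Empty k} (hψ : ψ.IsQF)
    (v : Empty → X) (xs : Fin k → X) :
    ∃ σ₀ ∈ c, ∀ σ ∈ c, σ ≤ σ₀ →
      (@BoundedFormula.Realize L X σ.str Empty k ψ v xs ↔
        @BoundedFormula.Realize L X (inter c).str Empty k ψ v xs) := by
  induction hψ with
  | falsum =>
    obtain ⟨w, hw⟩ := hcne
    exact ⟨w, hw, fun σ _ _ => Iff.rfl⟩
  | of_isAtomic h =>
    cases h with
    | equal t₁ t₂ =>
      obtain ⟨w, hw⟩ := hcne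
      refine ⟨w, hw, fun σ _ _ => ?_⟩
      show (@Term.realize L X σ.str _ (Sum.elim v xs) t₁ =
          @Term.realize L X σ.str _ (Sum.elim v xs) t₂) ↔
        (@Term.realize L X (inter c).str _ (Sum.elim v xs) t₁ =
          @Term.realize L X (inter c).str _ (Sum.elim v xs) t₂)
      rw [term_indep σ (inter c) t₁, term_indep σ (inter c) t₂]
    | @rel n R ts =>
      set y : Fin n → X :=
        fun i => @Term.realize L X (inter c).str _ (Sum.elim v xs) (ts i) with hy
      have hfun : ∀ σ : Interp L X,
          (fun i => @Term.realize L X σ.str _ (Sum.elim v xs) (ts i)) = y :=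
        fun σ => funext fun i => term_indep σ (inter c) (ts i) (Sum.elim v xs)
      by_cases hmem : y ∈ inter c n R
      · obtain ⟨w, hw⟩ := hcne
        refine ⟨w, hw, fun σ hσ _ => ?_⟩
        refine iff_of_true ?_ ?_
        · show (fun i => @Term.realize L X σ.str _ (Sum.elim v xs) (ts i)) ∈ σ n R
          rw [hfun σ]
          exact Set.biInter_subset_of_mem hσ hmem
        · show (fun i => @Term.realize L X (inter c).str _ (Sum.elim v xs) (ts i)) ∈
            (inter c) n R
          rw [hfun (inter c)]
          exact hmem
      · have : ∃ σ₁ ∈ c, y ∉ σ₁ n R := by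
          by_contra hcon
          push_neg at hcon
          exact hmem (Set.mem_iInter₂.2 hcon)
        obtain ⟨σ₁, hσ₁, hyσ₁⟩ := this
        refine ⟨σ₁, hσ₁, fun σ hσ hle => ?_⟩
        refine iff_of_false ?_ ?_
        · show (fun i => @Term.realize L X σ.str _ (Sum.elim v xs) (ts i)) ∉ σ n R
          rw [hfun σ]
          exact fun hy' => hyσ₁ (hle n R hy')
        · show (fun i => @Term.realize L X (inter c).str _ (Sum.elim v xs) (ts i)) ∉
            (inter c) n R
          rw [hfun (inter c)]
          exact hmem
  | imp h₁ h₂ ih₁ ih₂ =>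
    obtain ⟨σ₁, hσ₁, hiff₁⟩ := ih₁
    obtain ⟨σ₂, hσ₂, hiff₂⟩ := ih₂
    rcases eq_or_ne σ₁ σ₂ with rfl | hne
    · exact ⟨σ₁, hσ₁, fun σ hσ hle =>
        imp_congr (hiff₁ σ hσ hle) (hiff₂ σ hσ hle)⟩
    rcases hc hσ₁ hσ₂ hne with hle12 | hle21
    · exact ⟨σ₁, hσ₁, fun σ hσ hle =>
        imp_congr (hiff₁ σ hσ hle) (hiff₂ σ hσ (hle.trans hle12))⟩
    · exact ⟨σ₂, hσ₂, fun σ hσ hle =>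
        imp_congr (hiff₁ σ hσ (hle.trans hle21)) (hiff₂ σ hσ hle)⟩

lemma models_alls (ρ : Interp L X) {k : ℕ} (ψ : L.BoundedFormula Empty k) :
    ρ.Models ψ.alls ↔
      ∀ xs : Fin k → X, @BoundedFormula.Realize L X ρ.str Empty k ψ default xs := by
  letI := ρ.str
  exact BoundedFormula.realize_alls

lemma inter_mem {T : L.Theory} (hT : ∀ φ ∈ T, IsUniversalSentence φ)
    {c : Set (Interp L X)} (hc : IsChain (· ≤ ·) c) (hcne : c.Nonempty)
    (hsub : c ⊆ IntT L X T) : inter c ∈ IntT L X T := by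
  intro φ hφ
  obtain ⟨k, ψ, hqf, rfl⟩ := hT φ hφ
  rw [models_alls]
  intro xs
  obtain ⟨σ₀, hσ₀c, h⟩ := qf_stable hc hcne hqf default xs
  exact (h σ₀ hσ₀c le_rfl).mp ((models_alls σ₀ ψ).mp (hsub hσ₀c _ hφ) xs)

lemma realize_img (g : X ≃ X) (ρ : Interp L X) {α : Type*} : ∀ {k : ℕ}
    (φ : L.BoundedFormula α k) (v : α → X) (xs : Fin k → X),
    @BoundedFormula.Realize L X (Interp.img g ρ).str α k φ v xs ↔
      @BoundedFormula.Realize L X ρ.str α k φ (fun a => g.symm (v a))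
        (fun i => g.symm (xs i)) := by
  have helim : ∀ (v : α → X) (k : ℕ) (xs : Fin k → X),
      (Sum.elim (fun a => g.symm (v a)) (fun i => g.symm (xs i)) :
        α ⊕ (Fin k) → X) = fun a => g.symm (Sum.elim v xs a) := by
    intro v k xs
    funext a
    cases a <;> rfl
  intro k φ
  induction φ with
  | falsum => exact fun v xs => Iff.rfl
  | @equal n t₁ t₂ =>
    intro v xs
    show (@Term.realize L X (Interp.img g ρ).str _ (Sum.elim v xs) t₁ =
        @Term.realize L X (Interp.img g ρ).str _ (Sum.elim v xs) t₂) ↔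
      (@Term.realize L X ρ.str _
          (Sum.elim (fun a => g.symm (v a)) (fun i => g.symm (xs i))) t₁ =
        @Term.realize L X ρ.str _
          (Sum.elim (fun a => g.symm (v a)) (fun i => g.symm (xs i))) t₂)
    rw [helim v n xs, term_img g ρ (Interp.img g ρ) t₁,
      term_img g ρ (Interp.img g ρ) t₂]
    exact (g.symm.injective.eq_iff).symm
  | @rel n m R ts =>
    intro v xs
    show (fun j => g.symm ((fun i =>
        @Term.realize L X (Interp.img g ρ).str _ (Sum.elim v xs) (ts i)) j)) ∈ ρ m R ↔
      (fun i => @Term.realize L X ρ.str _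
        (Sum.elim (fun a => g.symm (v a)) (fun i => g.symm (xs i))) (ts i)) ∈ ρ m R
    have heq : (fun j => g.symm ((fun i =>
        @Term.realize L X (Interp.img g ρ).str _ (Sum.elim v xs) (ts i)) j)) =
      (fun i => @Term.realize L X ρ.str _
        (Sum.elim (fun a => g.symm (v a)) (fun i => g.symm (xs i))) (ts i)) := by
      funext i
      rw [helim v n xs, term_img g ρ (Interp.img g ρ) (ts i) (Sum.elim v xs)]
    rw [heq]
  | @imp n φ₁ φ₂ ih₁ ih₂ =>
    exact fun v xs => imp_congr (ih₁ v xs) (ih₂ v xs)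
  | @all n φ ih =>
    intro v xs
    constructor
    · intro h x
      have h' := (ih v (Fin.snoc xs (g x))).mp (h (g x))
      have heq : (fun i => g.symm ((Fin.snoc xs (g x) : Fin (n+1) → X) i)) =
          Fin.snoc (fun i => g.symm (xs i)) x := by
        funext i
        refine Fin.lastCases ?_ (fun j => ?_) i <;>
          simp [Fin.snoc_last, Fin.snoc_castSucc]
      rwa [heq] at h'
    · intro h x
      refine (ih v (Fin.snoc xs x)).mpr ?_
      have heq : (fun i => g.symm ((Fin.snoc xs x : Fin (n+1) → X) i)) =
          Fin.snoc (fun i => g.symm (xs i)) (g.symm x) := by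
        funext i
        refine Fin.lastCases ?_ (fun j => ?_) i <;>
          simp [Fin.snoc_last, Fin.snoc_castSucc]
      rw [heq]
      exact h (g.symm x)

lemma models_img (g : X ≃ X) (ρ : Interp L X) (φ : L.Sentence) :
    (Interp.img g ρ).Models φ ↔ ρ.Models φ := by
  have h := realize_img g ρ φ (default : Empty → X) (default : Fin 0 → X)
  have e1 : (fun a : Empty => g.symm ((default : Empty → X) a)) = default :=
    Subsingleton.elim _ _
  have e2 : (fun i : Fin 0 => g.symm ((default : Fin 0 → X) i)) = default :=
    Subsingleton.elim _ _
  rw [e1, e2] at h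
  exact h

end StmtAux

/-- If `T` is a set of universal first-order `L`-sentences and `Int^T(X)` is nonempty, then
below every member of `Int^T(X)` there is a minimal element of `(Int^T(X), ⊆)`, and every
minimal element of `Int^T(X)` is a reversible interpretation. -/
theorem stmt_6 (L : FirstOrder.Language) [L.IsRelational] (X : Type*) [Nonempty X]
    (T : L.Theory) (hT : ∀ φ ∈ T, IsUniversalSentence φ)
    (hne : (IntT L X T).Nonempty) :
    (∀ M ∈ IntT L X T, ∃ N, Interp.MinIn (IntT L X T) N ∧ Interp.le N M) ∧
    (∀ N, Interp.MinIn (IntT L X T) N → Interp.Reversible N) := by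
  constructor
  · intro M hM
    have hchain : ∀ c ⊆ {ρ : (Interp L X)ᵒᵈ | OrderDual.ofDual ρ ∈ IntT L X T ∧
        OrderDual.ofDual ρ ≤ M}, IsChain (· ≤ ·) c → ∀ y ∈ c,
        ∃ ub ∈ {ρ : (Interp L X)ᵒᵈ | OrderDual.ofDual ρ ∈ IntT L X T ∧
          OrderDual.ofDual ρ ≤ M}, ∀ z ∈ c, z ≤ ub := by
      intro c hcS hc y hy
      have hc' : IsChain (· ≤ ·) (OrderDual.ofDual '' c) := by
        rintro _ ⟨a, ha, rfl⟩ _ ⟨b, hb, rfl⟩ hab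
        exact (hc ha hb (fun h => hab (congrArg _ h))).symm
      have hcne : (OrderDual.ofDual '' c).Nonempty := ⟨y, y, hy, rfl⟩
      have hsub : OrderDual.ofDual '' c ⊆ IntT L X T := by
        rintro _ ⟨a, ha, rfl⟩
        exact (hcS ha).1
      refine ⟨OrderDual.toDual (StmtAux.inter (OrderDual.ofDual '' c)),
        ⟨StmtAux.inter_mem hT hc' hcne hsub, ?_⟩, fun z hz => ?_⟩
      · exact (StmtAux.inter_le (Set.mem_image_of_mem _ hy)).trans (hcS hy).2
      · exact StmtAux.inter_le (Set.mem_image_of_mem _ hz)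
    obtain ⟨N, hMN, hNmax⟩ := zorn_le_nonempty₀ (α := (Interp L X)ᵒᵈ)
      {ρ : (Interp L X)ᵒᵈ | OrderDual.ofDual ρ ∈ IntT L X T ∧
        OrderDual.ofDual ρ ≤ M} hchain (OrderDual.toDual M)
      (show OrderDual.toDual M ∈ {ρ : (Interp L X)ᵒᵈ |
          OrderDual.ofDual ρ ∈ IntT L X T ∧ OrderDual.ofDual ρ ≤ M} from ⟨hM, le_rfl⟩)
    refine ⟨OrderDual.ofDual N, ⟨hNmax.1.1, ?_⟩, StmtAux.le_iff.mpr hNmax.1.2⟩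
    rintro ⟨σ, hσInt, hσle, hσne⟩
    have hσle' : σ ≤ OrderDual.ofDual N := StmtAux.le_iff.mp hσle
    have hσS : OrderDual.toDual σ ∈ {ρ : (Interp L X)ᵒᵈ |
        OrderDual.ofDual ρ ∈ IntT L X T ∧ OrderDual.ofDual ρ ≤ M} :=
      ⟨hσInt, hσle'.trans hNmax.1.2⟩
    have := hNmax.2 hσS hσle'
    exact hσne (le_antisymm hσle' this)
  · rintro N ⟨hNInt, hNmin⟩ f hf n r x
    have hσInt : Interp.img f N ∈ IntT L X T :=
      fun φ hφ => (StmtAux.models_img f N φ).mpr (hNInt φ hφ)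
    have hle : Interp.le (Interp.img f N) N := by
      intro m s z hz
      have := hf m s _ hz
      simpa [Interp.img] using this
    have heq : Interp.img f N = N := by
      by_contra hne
      exact hNmin ⟨Interp.img f N, hσInt, hle, hne⟩
    constructor
    · exact hf n r x
    · intro h
      have : (fun k => f (x k)) ∈ Interp.img f N n r := by rw [heq]; exact h
      simpa [Interp.img] using this
end
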